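/- Let I = ⋃_{i=1}^∞ ([i², i²+i) ∩ ℕ) and J = ℕ \ I. Then the sets A_I and A_J are closed subsets of ℝ, neither A_I nor A_J is σ-lower porous in ℝ, and the Cartesian product A_I × A_J is lower porous in ℝ² equipped with the maximum metric. -/

import Mathlib

open Metric Filter Set

/-- γ(x,R,M): the supremum of radii r>0 of open balls contained in B(x,R) \ M
(equal to 0 if no such ball exists, by `Real.sSup_empty`). -/
noncomputable def porGamma {X : Type*} [MetricSpace X] (x : X) (R : ℝ) (M : Set X) : ℝ :=
  sSup {r : ℝ | 0 < r ∧ ∃ z : X, Metric.ball z r ⊆ Metric.ball x R \ M}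

/-- `M` is lower porous at `x`: liminf_{R→0+} 2γ(x,R,M)/R > 0. -/
def LowerPorousAt {X : Type*} [MetricSpace X] (M : Set X) (x : X) : Prop :=
  0 < Filter.liminf (fun R => 2 * porGamma x R M / R) (nhdsWithin 0 (Set.Ioi 0))

/-- `M` is (upper) porous at `x`: limsup_{R→0+} 2γ(x,R,M)/R > 0. -/
def UpperPorousAt {X : Type*} [MetricSpace X] (M : Set X) (x : X) : Prop :=
  0 < Filter.limsup (fun R => 2 * porGamma x R M / R) (nhdsWithin 0 (Set.Ioi 0))

/-- A set is lower porous if it is lower porous at each of its points. -/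
def LowerPorous {X : Type*} [MetricSpace X] (M : Set X) : Prop :=
  ∀ x ∈ M, LowerPorousAt M x

/-- A set is (upper) porous if it is porous at each of its points. -/
def UpperPorous {X : Type*} [MetricSpace X] (M : Set X) : Prop :=
  ∀ x ∈ M, UpperPorousAt M x

/-- A set is σ-lower porous if it is a countable union of lower porous sets. -/
def SigmaLowerPorous {X : Type*} [MetricSpace X] (A : Set X) : Prop :=
  ∃ f : ℕ → Set X, (∀ n, LowerPorous (f n)) ∧ A = ⋃ n, f n

/-- A set is σ-(upper) porous if it is a countable union of porous sets. -/
def SigmaUpperPorous {X : Type*} [MetricSpace X] (A : Set X) : Prop :=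
  ∃ f : ℕ → Set X, (∀ n, UpperPorous (f n)) ∧ A = ⋃ n, f n

/-- The open sets `D_n ⊆ (0,1)`; `D_0 = ∅` and for `n ≥ 1`,
`D_n = ⋃_{i=0}^{3^{n-1}-1} ((1+3i)/3^n, (2+3i)/3^n)`. -/
noncomputable def Dset : ℕ → Set ℝ
  | 0 => ∅
  | (n + 1) =>
      ⋃ i ∈ Finset.range (3 ^ n),
        Set.Ioo ((1 + 3 * (i : ℝ)) / 3 ^ (n + 1)) ((2 + 3 * (i : ℝ)) / 3 ^ (n + 1))

/-- `M_n = ∂D_n`, the boundary of `D_n` in `ℝ`. -/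
noncomputable def Mset (n : ℕ) : Set ℝ := frontier (Dset n)

/-- `D_I = ⋃_{n ∈ I} D_n`. -/
noncomputable def DsetI (I : Set ℕ) : Set ℝ := ⋃ n ∈ I, Dset n

/-- `M_I = ⋃_{n ∈ I} M_n`. -/
noncomputable def MsetI (I : Set ℕ) : Set ℝ := ⋃ n ∈ I, Mset n

/-- `A_I = [0,1] \ D_I`. -/
noncomputable def AsetI (I : Set ℕ) : Set ℝ := Set.Icc 0 1 \ DsetI I

/-- The index set `I = ⋃_{i≥1} [i², i²+i) ∩ ℕ`. -/
def Ispec : Set ℕ := {n | ∃ i : ℕ, 1 ≤ i ∧ i ^ 2 ≤ n ∧ n < i ^ 2 + i}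


lemma isOpen_Dset (n : ℕ) : IsOpen (Dset n) := by
  cases n with
  | zero => simpa [Dset] using isOpen_empty
  | succ n =>
    unfold Dset
    exact isOpen_biUnion (fun i _ => isOpen_Ioo)

lemma isOpen_DsetI (K : Set ℕ) : IsOpen (DsetI K) :=
  isOpen_biUnion (fun n _ => isOpen_Dset n)

lemma isClosed_AsetI (K : Set ℕ) : IsClosed (AsetI K) :=
  IsClosed.sdiff isClosed_Icc (isOpen_DsetI K)

lemma mem_Dset_succ {x : ℝ} {n : ℕ} :
    x ∈ Dset (n+1) ↔ ∃ i : ℕ, i < 3^n ∧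
      (1 + 3*(i:ℝ))/3^(n+1) < x ∧ x < (2 + 3*(i:ℝ))/3^(n+1) := by
  unfold Dset
  simp only [Set.mem_iUnion, Finset.mem_range, Set.mem_Ioo]
  tauto

lemma mem_AsetI {x : ℝ} {K : Set ℕ} :
    x ∈ AsetI K ↔ x ∈ Set.Icc (0:ℝ) 1 ∧ ∀ m ∈ K, x ∉ Dset m := by
  unfold AsetI DsetI
  simp [Set.mem_diff, Set.mem_iUnion]

lemma zero_mem_AsetI (K : Set ℕ) : (0:ℝ) ∈ AsetI K := by
  rw [mem_AsetI]
  refine ⟨by simp, fun m _ => ?_⟩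
  cases m with
  | zero => simp [Dset]
  | succ n =>
    rw [mem_Dset_succ]
    rintro ⟨i, -, h1, -⟩
    have : (0:ℝ) < (1 + 3*(i:ℝ))/3^(n+1) := by positivity
    linarith

lemma not_mem_Dset_int {x : ℝ} {n : ℕ} (j : ℤ) (hj : x * 3^(n+1) = j) :
    x ∉ Dset (n+1) := by
  rw [mem_Dset_succ]
  rintro ⟨i, -, h1, h2⟩
  have h3 : (0:ℝ) < 3^(n+1) := by positivity
  rw [div_lt_iff₀ h3] at h1
  rw [lt_div_iff₀ h3] at h2
  rw [hj] at h1 h2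
  have h1' : (1 + 3*(i:ℤ)) < j := by exact_mod_cast h1
  have h2' : j < 2 + 3*(i:ℤ) := by exact_mod_cast h2
  omega

lemma not_mem_Dset_floor {x : ℝ} {n : ℕ} (j : ℤ) (h0 : j % 3 ≠ 1)
    (h1 : (j:ℝ) ≤ x * 3^(n+1)) (h2 : x * 3^(n+1) ≤ j + 1) :
    x ∉ Dset (n+1) := by
  rw [mem_Dset_succ]
  rintro ⟨i, -, hl, hr⟩
  have h3 : (0:ℝ) < 3^(n+1) := by positivity
  rw [div_lt_iff₀ h3] at hl
  rw [lt_div_iff₀ h3] at hr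
  have hA : (1 + 3*(i:ℝ)) < (j:ℝ) + 1 := lt_of_lt_of_le hl h2
  have hB : (j:ℝ) < 2 + 3*(i:ℝ) := lt_of_le_of_lt h1 hr
  have hA' : (1 + 3*(i:ℤ)) < j + 1 := by exact_mod_cast hA
  have hB' : j < 2 + 3*(i:ℤ) := by exact_mod_cast hB
  omega

lemma not_mem_Dset_of_int_mul {x : ℝ} {s m : ℕ} (hs : s ≤ m) (j : ℤ)
    (h : x * 3^s = j) : x ∉ Dset m := by
  cases m with
  | zero => simp [Dset]
  | succ n =>
    refine not_mem_Dset_int (j * 3^(n+1-s)) ?_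
    have : (3:ℝ)^(n+1) = 3^s * 3^(n+1-s) := by
      rw [← pow_add, Nat.add_sub_cancel' hs]
    rw [this, ← mul_assoc, h]
    push_cast
    ring

lemma hole_subset_Dset {n i : ℕ} (hi : i < 3^n) :
    Set.Ioo ((1 + 3*(i:ℝ))/3^(n+1)) ((2 + 3*(i:ℝ))/3^(n+1)) ⊆ Dset (n+1) := by
  intro x hx
  exact mem_Dset_succ.2 ⟨i, hi, hx.1, hx.2⟩

lemma dset_dichotomy {N m : ℕ} (hm1 : 1 ≤ m) (hmN : m ≤ N) (k : ℕ) :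
    (Set.Ioo ((k:ℝ)/3^N) ((k+1)/3^N) ∩ Dset m = ∅) ∨
    ∃ i : ℕ, i < 3^(m-1) ∧
      Set.Ioo ((k:ℝ)/3^N) ((k+1)/3^N) ⊆
        Set.Ioo ((1 + 3*(i:ℝ))/3^m) ((2 + 3*(i:ℝ))/3^m) := by
  obtain ⟨m', rfl⟩ : ∃ m', m = m' + 1 := ⟨m - 1, by omega⟩
  by_cases hE : Set.Ioo ((k:ℝ)/3^N) ((k+1)/3^N) ∩ Dset (m'+1) = ∅
  · exact Or.inl hE
  · right
    obtain ⟨x, hxI, hxD⟩ := Set.nonempty_iff_ne_empty.2 hE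
    obtain ⟨i, hi, hl, hr⟩ := mem_Dset_succ.1 hxD
    refine ⟨i, by simpa using hi, ?_⟩
    have hN : (0:ℝ) < 3^N := by positivity
    have hm : (0:ℝ) < 3^(m'+1) := by positivity
    have hpow : (3:ℝ)^N = 3^(m'+1) * 3^(N-(m'+1)) := by
      rw [← pow_add, Nat.add_sub_cancel' hmN]
    -- left endpoint: (1+3i)/3^(m'+1) ≤ k/3^N
    have hleft : (1 + 3*(i:ℝ))/3^(m'+1) ≤ (k:ℝ)/3^N := by
      by_contra hc
      push_neg at hc
      set a : ℕ := (1 + 3*i) * 3^(N-(m'+1)) with ha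
      have hau : ((a:ℝ))/3^N = (1 + 3*(i:ℝ))/3^(m'+1) := by
        rw [hpow]
        push_cast [ha]
        field_simp
      have h1 : (k:ℝ)/3^N < (a:ℝ)/3^N := by rw [hau]; exact hc
      have h2 : ((a:ℝ))/3^N < ((k:ℝ)+1)/3^N := by
        rw [hau]; exact lt_trans hl hxI.2
      have h1' : (k:ℕ) < a := by
        have := (div_lt_div_iff_of_pos_right hN).1 h1
        exact_mod_cast this
      have h2' : a < k + 1 := by
        have := (div_lt_div_iff_of_pos_right hN).1 h2
        exact_mod_cast this
      omega
    have hright : ((k:ℝ)+1)/3^N ≤ (2 + 3*(i:ℝ))/3^(m'+1) := by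
      by_contra hc
      push_neg at hc
      set b : ℕ := (2 + 3*i) * 3^(N-(m'+1)) with hb
      have hbu : ((b:ℝ))/3^N = (2 + 3*(i:ℝ))/3^(m'+1) := by
        rw [hpow]
        push_cast [hb]
        field_simp
      have h1 : ((b:ℝ))/3^N < ((k:ℝ)+1)/3^N := by rw [hbu]; exact hc
      have h2 : (k:ℝ)/3^N < (b:ℝ)/3^N := by
        rw [hbu]; exact lt_trans hxI.1 hr
      have h1' : b < k + 1 := by
        have := (div_lt_div_iff_of_pos_right hN).1 h1
        exact_mod_cast this
      have h2' : k < b := by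
        have := (div_lt_div_iff_of_pos_right hN).1 h2
        exact_mod_cast this
      omega
    intro y hy
    exact ⟨lt_of_le_of_lt hleft hy.1, lt_of_lt_of_le hy.2 hright⟩

lemma exists_hole {w : ℝ} (hw : w ∈ Set.Icc (0:ℝ) 1) (n : ℕ) :
    ∃ i : ℕ, i < 3^n ∧
      w - 2/3^(n+1) ≤ (1 + 3*(i:ℝ))/3^(n+1) ∧
      (2 + 3*(i:ℝ))/3^(n+1) ≤ w + 2/3^(n+1) := by
  set i : ℕ := min ⌊w * 3^n⌋₊ (3^n - 1) with hidef
  have h3n : (0:ℝ) < 3^n := by positivity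
  have hw0 : 0 ≤ w * 3^n := mul_nonneg hw.1 (by positivity)
  have hub : (i:ℝ) ≤ w * 3^n := by
    have h1 : i ≤ ⌊w * 3^n⌋₊ := min_le_left _ _
    calc (i:ℝ) ≤ (⌊w * 3^n⌋₊ : ℝ) := Nat.cast_le.2 h1
    _ ≤ w * 3^n := Nat.floor_le hw0
  have hlb : w * 3^n - 1 ≤ (i:ℝ) := by
    rcases le_or_gt ⌊w * 3^n⌋₊ (3^n - 1) with h | h
    · have hieq : i = ⌊w * 3^n⌋₊ := by omega
      rw [hieq]
      have := Nat.lt_floor_add_one (w * 3^n)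
      linarith
    · have hieq : i = 3^n - 1 := by omega
      have h1 : ((3^n - 1 : ℕ) : ℝ) = (3:ℝ)^n - 1 := by
        have : (1:ℕ) ≤ 3^n := Nat.one_le_pow _ _ (by norm_num)
        push_cast [this]
        ring
      rw [hieq, h1]
      have : w * 3^n ≤ 3^n := by nlinarith [hw.2]
      linarith
  have hi3 : i < 3^n := by
    have : (1:ℕ) ≤ 3^n := Nat.one_le_pow _ _ (by norm_num)
    omega
  have hpe : (3:ℝ)^(n+1) = 3^n * 3 := by ring
  have hcancel : (2/3^(n+1) : ℝ) * 3^(n+1) = 2 :=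
    div_mul_cancel₀ _ (by positivity)
  refine ⟨i, hi3, ?_, ?_⟩
  · rw [le_div_iff₀ (by positivity : (0:ℝ) < 3^(n+1))]
    nlinarith
  · rw [div_le_iff₀ (by positivity : (0:ℝ) < 3^(n+1))]
    nlinarith

lemma nl_nat (m₂ : ℕ) : ∀ m₁ i₁ i₂ : ℕ, (1 + 3*i₁) * 3^m₂ ≠ (2 + 3*i₂) * 3^m₁ := by
  induction m₂ with
  | zero =>
    intro m₁ i₁ i₂
    cases m₁ with
    | zero => simp; omega
    | succ k =>
      intro h
      have : (2 + 3*i₂) * 3^(k+1) = 3 * ((2 + 3*i₂) * 3^k) := by ring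
      omega
  | succ s ih =>
    intro m₁ i₁ i₂
    cases m₁ with
    | zero =>
      intro h
      have : (1 + 3*i₁) * 3^(s+1) = 3 * ((1 + 3*i₁) * 3^s) := by ring
      omega
    | succ k =>
      intro h
      have h3 : 3 * ((1 + 3*i₁) * 3^s) = 3 * ((2 + 3*i₂) * 3^k) := by
        have e1 : (1 + 3*i₁) * 3^(s+1) = 3 * ((1 + 3*i₁) * 3^s) := by ring
        have e2 : (2 + 3*i₂) * 3^(k+1) = 3 * ((2 + 3*i₂) * 3^k) := by ring
        omega
      exact ih k i₁ i₂ (by omega)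

lemma nl_real {m₁ m₂ i₁ i₂ : ℕ} :
    (1 + 3*(i₁:ℝ))/3^m₁ ≠ (2 + 3*(i₂:ℝ))/3^m₂ := by
  intro h
  rw [div_eq_div_iff (by positivity) (by positivity)] at h
  have : (1 + 3*i₁) * 3^m₂ = (2 + 3*i₂) * 3^m₁ := by exact_mod_cast h
  exact nl_nat m₂ m₁ i₁ i₂ this

lemma exists_good_interval (K : Set ℕ) {t₀ ε : ℝ} (ht₀ : t₀ ∈ AsetI K) (hε : 0 < ε) :
    ∃ N k₀ : ℕ, k₀ + 1 ≤ 3^N ∧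
      Set.Ioo ((k₀:ℝ)/3^N) (((k₀:ℝ)+1)/3^N) ⊆ Metric.ball t₀ ε ∧
      ∀ m ∈ K, 1 ≤ m → m ≤ N →
        Set.Ioo ((k₀:ℝ)/3^N) (((k₀:ℝ)+1)/3^N) ∩ Dset m = ∅ := by
  obtain ⟨ht01, htD⟩ := mem_AsetI.1 ht₀
  obtain ⟨N, hN⟩ : ∃ N : ℕ, (1/3:ℝ)^N < ε := exists_pow_lt_of_lt_one hε (by norm_num)
  have hNe : (1:ℝ)/3^N < ε := by
    rw [div_pow, one_pow] at hN; exact hN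
  have h3N : (0:ℝ) < 3^N := by positivity
  -- generic interval properties
  have ballOf : ∀ k₀ : ℕ, ((k₀:ℝ)/3^N ≤ t₀ ∧ t₀ ≤ ((k₀:ℝ)+1)/3^N) →
      Set.Ioo ((k₀:ℝ)/3^N) (((k₀:ℝ)+1)/3^N) ⊆ Metric.ball t₀ ε := by
    rintro k₀ ⟨h1, h2⟩ y hy
    rw [Metric.mem_ball, Real.dist_eq, abs_sub_lt_iff]
    have hgap : ((k₀:ℝ)+1)/3^N - (k₀:ℝ)/3^N = 1/3^N := by ring
    constructor <;> nlinarith [hy.1, hy.2]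
  by_cases hc : (∃ m i : ℕ, 1 ≤ m ∧ m ≤ N ∧ t₀ = (1 + 3*(i:ℝ))/3^m) ∨ t₀ = 1
  · -- LEFT interval
    have hKnat : ∃ K₀ : ℕ, 1 ≤ K₀ ∧ t₀ * 3^N = (K₀:ℝ) := by
      rcases hc with ⟨m, i, hm1, hmN, rfl⟩ | rfl
      · refine ⟨(1 + 3*i) * 3^(N-m), Nat.mul_pos (by omega) (pow_pos (by norm_num) _), ?_⟩
        have hpow : (3:ℝ)^N = 3^m * 3^(N-m) := by
          rw [← pow_add, Nat.add_sub_cancel' hmN]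
        rw [hpow]
        push_cast
        field_simp
      · exact ⟨3^N, Nat.one_le_pow _ _ (by norm_num), by push_cast; ring⟩
    obtain ⟨K₀, hK₀1, hK₀⟩ := hKnat
    have ht₀eq : t₀ = (K₀:ℝ)/3^N := by
      field_simp at hK₀ ⊢
      linarith [hK₀]
    have hK₀le : K₀ ≤ 3^N := by
      have : (K₀:ℝ) ≤ 3^N := by
        rw [← hK₀]
        nlinarith [ht01.2]
      exact_mod_cast this
    refine ⟨N, K₀ - 1, by omega, ?_, ?_⟩
    · have hcast : ((K₀ - 1 : ℕ) : ℝ) = (K₀:ℝ) - 1 := by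
        push_cast [hK₀1]; ring
      apply ballOf
      rw [hcast, ht₀eq]
      refine ⟨?_, ?_⟩
      · rw [div_le_div_iff₀ h3N h3N]; nlinarith
      · rw [div_le_div_iff₀ h3N h3N]; nlinarith
    · intro m hmK hm1 hmN
      rcases dset_dichotomy hm1 hmN (K₀ - 1) with h | ⟨i, hi, hsub⟩
      · exact h
      · exfalso
        have hcast : ((K₀ - 1 : ℕ) : ℝ) = (K₀:ℝ) - 1 := by
          push_cast [hK₀1]; ring
        have hne : ((K₀-1 : ℕ):ℝ)/3^N < (((K₀-1:ℕ)):ℝ)/3^N + 1/3^N := by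
          have : (0:ℝ) < 1/3^N := by positivity
          linarith
        have hio : (((K₀-1:ℕ)):ℝ)/3^N + 1/3^N = (((K₀-1:ℕ):ℝ)+1)/3^N := by ring
        -- endpoints of hole
        have hsub' := Set.Ioo_subset_Ioo_iff (by rw [← hio] at *; linarith) |>.1 hsub
        obtain ⟨hu, hv⟩ := hsub'
        -- t₀ = right endpoint of the interval
        have ht₀v : t₀ ≤ (2 + 3*(i:ℝ))/3^m := by
          rw [ht₀eq]
          calc (K₀:ℝ)/3^N = (((K₀-1:ℕ):ℝ)+1)/3^N := by rw [hcast]; ring_nf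
          _ ≤ _ := hv
        have ht₀u : (1 + 3*(i:ℝ))/3^m < t₀ := by
          rw [ht₀eq]
          calc (1 + 3*(i:ℝ))/3^m ≤ ((K₀-1:ℕ):ℝ)/3^N := hu
          _ < (K₀:ℝ)/3^N := by
            rw [hcast]
            apply div_lt_div_of_pos_right ?_ h3N <;> linarith
        -- t₀ not in Dset m, so t₀ not in the open hole; hence t₀ = right endpoint
        obtain ⟨m', rfl⟩ : ∃ m', m = m' + 1 := ⟨m - 1, by omega⟩
        have htD' := htD _ hmK
        have hnotin : t₀ ∉ Set.Ioo ((1 + 3*(i:ℝ))/3^(m'+1)) ((2 + 3*(i:ℝ))/3^(m'+1)) :=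
          fun hmem => htD' (hole_subset_Dset (by simpa using hi) hmem)
        have ht₀veq : t₀ = (2 + 3*(i:ℝ))/3^(m'+1) := by
          rcases lt_or_eq_of_le ht₀v with h | h
          · exact absurd ⟨ht₀u, h⟩ hnotin
          · exact h
        -- contradiction with hc
        rcases hc with ⟨m₁, i₁, hm₁1, hm₁N, ht₁⟩ | h1
        · exact nl_real (ht₁ ▸ ht₀veq : (1 + 3*(i₁:ℝ))/3^m₁ = (2 + 3*(i:ℝ))/3^(m'+1)).symm.symm
        · -- t₀ = 1 : 3^(m'+1) = 2 + 3 i impossible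
          rw [h1] at ht₀veq
          have : (3:ℝ)^(m'+1) = 2 + 3*(i:ℝ) := by
            field_simp at ht₀veq
            linarith
          have hnat : 3^(m'+1) = 2 + 3*i := by exact_mod_cast this
          have : 3^(m'+1) = 3 * 3^m' := by ring
          omega
  · -- RIGHT interval
    push_neg at hc
    obtain ⟨hblock, ht₀ne1⟩ := hc
    have ht₀lt1 : t₀ < 1 := lt_of_le_of_ne ht01.2 ht₀ne1
    set k₀ : ℕ := ⌊t₀ * 3^N⌋₊ with hk₀
    have hw0 : 0 ≤ t₀ * 3^N := mul_nonneg ht01.1 (by positivity)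
    have hfl : (k₀:ℝ) ≤ t₀ * 3^N := Nat.floor_le hw0
    have hfu : t₀ * 3^N < (k₀:ℝ) + 1 := Nat.lt_floor_add_one _
    have hk₀lt : k₀ + 1 ≤ 3^N := by
      have : t₀ * 3^N < 3^N := by nlinarith
      have : (k₀:ℝ) < 3^N := by linarith
      have : (k₀:ℕ) < 3^N := by exact_mod_cast this
      omega
    have hmem : (k₀:ℝ)/3^N ≤ t₀ ∧ t₀ < ((k₀:ℝ)+1)/3^N := by
      constructor
      · rw [div_le_iff₀ h3N]; linarith
      · rw [lt_div_iff₀ h3N]; linarith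
    refine ⟨N, k₀, hk₀lt, ballOf k₀ ⟨hmem.1, le_of_lt hmem.2⟩, ?_⟩
    intro m hmK hm1 hmN
    rcases dset_dichotomy hm1 hmN k₀ with h | ⟨i, hi, hsub⟩
    · exact h
    · exfalso
      have hne : (k₀:ℝ)/3^N < ((k₀:ℝ)+1)/3^N := by
        apply div_lt_div_of_pos_right ?_ h3N <;> linarith
      have hsub' := Set.Ioo_subset_Ioo_iff hne |>.1 hsub
      obtain ⟨hu, hv⟩ := hsub'
      obtain ⟨m', rfl⟩ : ∃ m', m = m' + 1 := ⟨m - 1, by omega⟩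
      have htD' := htD _ hmK
      have hnotin : t₀ ∉ Set.Ioo ((1 + 3*(i:ℝ))/3^(m'+1)) ((2 + 3*(i:ℝ))/3^(m'+1)) :=
        fun hmm => htD' (hole_subset_Dset (by simpa using hi) hmm)
      have ht₀u : (1 + 3*(i:ℝ))/3^(m'+1) ≤ t₀ := le_trans hu hmem.1
      have ht₀v : t₀ < (2 + 3*(i:ℝ))/3^(m'+1) := lt_of_lt_of_le hmem.2 hv
      have ht₀eq : t₀ = (1 + 3*(i:ℝ))/3^(m'+1) := by
        rcases eq_or_lt_of_le ht₀u with h | h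
        · exact h.symm
        · exact absurd ⟨h, ht₀v⟩ hnotin
      exact hblock (m'+1) i (by omega) hmN ht₀eq

lemma exists_ball_of_lt_porGamma {X : Type*} [MetricSpace X] {x : X} {R c : ℝ} {M : Set X}
    (hc : 0 ≤ c) (h : c < porGamma x R M) :
    ∃ r : ℝ, ∃ z : X, c < r ∧ Metric.ball z r ⊆ Metric.ball x R \ M := by
  by_contra hcon
  push_neg at hcon
  have : porGamma x R M ≤ c := by
    apply Real.sSup_le _ hc
    rintro r ⟨hr, z, hz⟩
    by_contra hrc
    push_neg at hrc
    exact hcon r z hrc hz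
  linarith

lemma lowerPorousAt_bound {X : Type*} [MetricSpace X] {M : Set X} {x : X}
    (h : LowerPorousAt M x) :
    ∃ m : ℕ, ∀ R : ℝ, 0 < R → R < 1/(m+1) → R/(m+1) ≤ 2 * porGamma x R M := by
  unfold LowerPorousAt at h
  rw [Filter.liminf_eq] at h
  have hex : ∃ a : ℝ, 0 < a ∧
      ∀ᶠ R in nhdsWithin 0 (Set.Ioi 0), a ≤ 2 * porGamma x R M / R := by
    by_contra hcon
    push_neg at hcon
    have : sSup {a | ∀ᶠ R in nhdsWithin 0 (Set.Ioi 0), a ≤ 2 * porGamma x R M / R} ≤ 0 := by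
      apply Real.sSup_le _ le_rfl
      intro a ha
      by_contra hac
      push_neg at hac
      exact (hcon a hac) (Filter.Eventually.mono (ha : ∀ᶠ R in nhdsWithin 0 (Set.Ioi 0), a ≤ 2 * porGamma x R M / R) fun R h => not_lt.2 h)
    linarith
  obtain ⟨a, ha, hev⟩ := hex
  rw [eventually_nhdsWithin_iff, Metric.eventually_nhds_iff] at hev
  obtain ⟨δ, hδ, hδ'⟩ := hev
  obtain ⟨m, hm⟩ := exists_nat_one_div_lt (lt_min_iff.2 ⟨ha, hδ⟩ : (0:ℝ) < min a δ)
  refine ⟨m, fun R hR hRm => ?_⟩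
  have h1 : (1:ℝ)/(m+1) < a := lt_of_lt_of_le hm (min_le_left _ _)
  have h2 : (1:ℝ)/(m+1) < δ := lt_of_lt_of_le hm (min_le_right _ _)
  have hd : dist R 0 < δ := by
    rw [Real.dist_eq, sub_zero, abs_of_pos hR]; linarith
  have := hδ' hd hR
  have hγ : a * R ≤ 2 * porGamma x R M := by
    rw [le_div_iff₀ hR] at this
    linarith [this]
  calc R/(m+1) = (1/(m+1)) * R := by ring
  _ ≤ a * R := by nlinarith
  _ ≤ _ := hγ

set_option maxHeartbeats 2000000 in
lemma not_sigmaLowerPorous (K : Set ℕ)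
    (hgap : ∀ L : ℕ, ∃ p : ℕ, L ≤ p ∧ ∀ m ∈ K, p ≤ m → p + L ≤ m) :
    ¬ SigmaLowerPorous (AsetI K) := by
  rintro ⟨f, hf, hA⟩
  classical
  set A := AsetI K with hAdef
  -- decomposition into uniform pieces
  set B : ℕ × ℕ → Set ℝ := fun km =>
    {x | x ∈ f km.1 ∧ ∀ R : ℝ, 0 < R → R < 1/(km.2+1) →
        R/(km.2+1) ≤ 2 * porGamma x R (f km.1)} with hBdef
  have hcover : ∀ x ∈ A, ∃ km : ℕ × ℕ, x ∈ B km := by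
    intro x hx
    rw [hA] at hx
    obtain ⟨k, hk⟩ := Set.mem_iUnion.1 hx
    obtain ⟨m, hm⟩ := lowerPorousAt_bound (hf k x hk)
    exact ⟨(k, m), hk, hm⟩
  -- Baire category
  have hAclosed : IsClosed A := isClosed_AsetI K
  haveI : CompleteSpace ↥A := hAclosed.completeSpace_coe
  haveI : Nonempty ↥A := ⟨⟨0, zero_mem_AsetI K⟩⟩
  have hUnion : (⋃ km : ℕ × ℕ, (Subtype.val ⁻¹' closure (B km) : Set ↥A)) = Set.univ := by
    ext x
    simp only [Set.mem_iUnion, Set.mem_univ, iff_true, Set.mem_preimage]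
    obtain ⟨km, hkm⟩ := hcover x.1 x.2
    exact ⟨km, subset_closure hkm⟩
  obtain ⟨km, x₀, hx₀⟩ := nonempty_interior_of_iUnion_of_closed
    (fun km => (isClosed_closure).preimage continuous_subtype_val) hUnion
  obtain ⟨ε, hε, hball⟩ := Metric.mem_nhds_iff.1 (mem_interior_iff_mem_nhds.1 hx₀)
  set t₀ : ℝ := (x₀ : ℝ) with ht₀def
  have hclose : ∀ y : ℝ, y ∈ A → |y - t₀| < ε → y ∈ closure (B km) := by
    intro y hy hyd
    have : (⟨y, hy⟩ : ↥A) ∈ Metric.ball x₀ ε := by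
      rw [Metric.mem_ball, Subtype.dist_eq, Real.dist_eq]
      exact hyd
    exact hball this
  -- good triadic interval inside the portion
  obtain ⟨N, k₀, hk3, hIball, hgood⟩ := exists_good_interval K x₀.2 hε
  set c₀ : ℝ := (k₀:ℝ)/3^N with hc₀def
  have h3N : (0:ℝ) < 3^N := by positivity
  have hend : ((k₀:ℝ)+1)/3^N = c₀ + 1/3^N := by rw [hc₀def]; ring
  have hc₀0 : 0 ≤ c₀ := by positivity
  have hc₀1 : c₀ + 1/3^N ≤ 1 := by
    rw [← hend, div_le_one h3N]
    exact_mod_cast hk3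
  -- choose scales
  obtain ⟨k, mb⟩ := km
  obtain ⟨L, hLN, hLmb⟩ : ∃ L : ℕ, N + 1 ≤ L ∧ 8*(mb+1)+1 ≤ L :=
    ⟨max (N+1) (8*(mb+1)+1), le_max_left _ _, le_max_right _ _⟩
  obtain ⟨p, hLp, hpg⟩ := hgap L
  obtain ⟨q, hqdef⟩ : ∃ q : ℕ, q = p + L := ⟨_, rfl⟩
  have hNp : N + 1 ≤ p := le_trans hLN hLp
  have h3L : 8*(mb+1) < 3^L := by
    have h2 : L < 3^L := Nat.lt_pow_self (by norm_num)
    omega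
  have h3p : (0:ℝ) < 3^p := by positivity
  have h3q : (0:ℝ) < 3^q := by positivity
  have hppow : (3:ℝ)^p = 3^N * 3^(p-N) := by
    rw [← pow_add, Nat.add_sub_cancel' (by omega : N ≤ p)]
  have hps : (1:ℝ)/3^p < 1/3^N := by
    apply div_lt_div_of_pos_left one_pos h3N
    apply pow_lt_pow_right₀ (by norm_num) (by omega)
  have h2ps : (2:ℝ)/3^p ≤ 1/3^N := by
    have : (3:ℝ)^(N+1) ≤ 3^p := pow_le_pow_right₀ (by norm_num) (by omega)
    rw [div_le_div_iff₀ h3p h3N]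
    have : (3:ℝ)^(N+1) = 3 * 3^N := by ring
    nlinarith
  set t : ℝ := c₀ + 1/3^p with htdef
  have htIoo : t ∈ Set.Ioo c₀ (c₀ + 1/3^N) := by
    rw [Set.mem_Ioo, htdef]
    have h1 : (0:ℝ) < 1/3^p := by positivity
    constructor
    · linarith
    · linarith
  have h2strict : (2:ℝ)/3^p < 1/3^N := by
    rw [div_lt_div_iff₀ h3p h3N]
    have h1 : (3:ℝ)^(N+1) ≤ 3^p := pow_le_pow_right₀ (by norm_num) (by omega)
    have h2 : (3:ℝ)^(N+1) = 3 * 3^N := by ring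
    nlinarith
  -- generic membership of fine grid points in A
  have hgen : ∀ x' : ℝ, (∃ j : ℤ, x' * 3^q = (j:ℝ)) → c₀ < x' → x' < c₀ + 2/3^p →
      x' ∈ A := by
    rintro x' ⟨j, hj⟩ hx'l hx'r
    have hx'N : x' < c₀ + 1/3^N := by linarith
    rw [hAdef, mem_AsetI]
    refine ⟨⟨by linarith, by linarith⟩, ?_⟩
    intro m hmK
    rcases Nat.eq_zero_or_pos m with rfl | hm1
    · simp [Dset]
    rcases le_or_gt m N with hmN | hmN
    · intro hmem
      have hdisj := hgood m hmK hm1 hmN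
      rw [Set.eq_empty_iff_forall_notMem] at hdisj
      refine hdisj x' ⟨⟨hx'l, ?_⟩, hmem⟩
      rw [hend]; exact hx'N
    rcases lt_or_ge m p with hmp | hpm
    · -- N < m < p : floor argument
      obtain ⟨m', rfl⟩ : ∃ m', m = m' + 1 := ⟨m - 1, by omega⟩
      set X : ℝ := (3:ℝ)^(m'+1) with hXdef
      have hX0 : (0:ℝ) < X := by rw [hXdef]; positivity
      have hXpow : X = 3^N * 3^(m'+1-N) := by
        rw [hXdef, ← pow_add, Nat.add_sub_cancel' (by omega : N ≤ m'+1)]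
      set j₀ : ℤ := (k₀:ℤ) * 3^(m'+1-N) with hj₀def
      have hdvd : (3:ℤ) ∣ j₀ := by
        rw [hj₀def]
        exact Dvd.dvd.mul_left (dvd_pow_self 3 (by omega : m'+1-N ≠ 0)) _
      have hc₀X : c₀ * X = (j₀:ℝ) := by
        rw [hc₀def, hXpow, hj₀def]
        push_cast
        field_simp
      apply not_mem_Dset_floor j₀
      · omega
      · rw [← hXdef, ← hc₀X]
        nlinarith
      · rw [← hXdef]
        have hfrac : (2/3^p) * X ≤ 1 := by
          rw [div_mul_eq_mul_div, div_le_one h3p]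
          have h1 : X * 3 ≤ 3^p := by
            rw [hXdef, ← pow_succ]
            exact pow_le_pow_right₀ (by norm_num) (by omega)
          linarith
        have hxx : x' * X < (c₀ + 2/3^p) * X := by
          exact mul_lt_mul_of_pos_right hx'r hX0
        rw [add_mul, hc₀X] at hxx
        nlinarith
    rcases lt_or_ge m q with hmq | hqm
    · have := hpg m hmK hpm
      omega
    · exact not_mem_Dset_of_int_mul hqm j hj
  -- t belongs to A
  have hq1 : (3:ℝ)^q = 3^N * 3^(q-N) := by
    rw [← pow_add, Nat.add_sub_cancel' (by omega : N ≤ q)]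
  have hq2 : (3:ℝ)^q = 3^p * 3^(q-p) := by
    rw [← pow_add, Nat.add_sub_cancel' (by omega : p ≤ q)]
  have htgrid : ∃ j : ℤ, t * 3^q = (j:ℝ) := by
    refine ⟨(k₀:ℤ) * 3^(q-N) + 3^(q-p), ?_⟩
    have e1 : (k₀:ℝ)/3^N * 3^q = (k₀:ℝ) * 3^(q-N) := by
      rw [hq1]; field_simp
    have e2 : (1:ℝ)/3^p * 3^q = 3^(q-p) := by
      rw [hq2]; field_simp
    rw [htdef, hc₀def, add_mul, e1, e2]
    push_cast
    ring
  have htA : t ∈ A := by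
    have hpinv : (0:ℝ) < 1/3^p := by positivity
    have h12 : (2:ℝ)/3^p - 1/3^p = 1/3^p := by ring
    refine hgen t htgrid ?_ ?_
    · rw [htdef]; linarith
    · rw [htdef]; linarith
  -- final contradiction via a too-small hole at t
  have htball : |t - t₀| < ε := by
    have h := hIball (by rw [hend]; exact htIoo)
    rwa [Metric.mem_ball, Real.dist_eq] at h
  have htcl : t ∈ closure (B (k, mb)) := hclose t htA htball
  set Rh : ℝ := 1/(2*3^p) with hRhdef
  have hRh0 : 0 < Rh := by rw [hRhdef]; positivity
  obtain ⟨xb, hxbB, hxbd⟩ := Metric.mem_closure_iff.1 htcl Rh hRh0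
  have hxbB' : xb ∈ f k ∧ ∀ R : ℝ, 0 < R → R < 1/(mb+1) →
      R/(mb+1) ≤ 2 * porGamma xb R (f k) := by
    rw [hBdef] at hxbB
    exact hxbB
  obtain ⟨hxb1, hxb2⟩ := hxbB'
  have h3Lp : (3:ℕ)^L ≤ 3^p := Nat.pow_le_pow_right (by norm_num) hLp
  have h8L : (8:ℝ)*((mb:ℝ)+1) < 3^L := by
    have h := (Nat.cast_lt (α := ℝ)).2 h3L
    push_cast at h
    linarith
  have h3LpR : (3:ℝ)^L ≤ 3^p := by
    have h := (Nat.cast_le (α := ℝ)).2 h3Lp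
    push_cast at h
    linarith
  have hmb0 : (0:ℝ) < (mb:ℝ)+1 := by positivity
  have hRhmb : Rh < 1/(mb+1) := by
    rw [hRhdef, div_lt_div_iff₀ (by positivity) hmb0]
    nlinarith
  have hγ := hxb2 Rh hRh0 hRhmb
  have hqLpow : (3:ℝ)^q = 3^p * 3^L := by rw [hqdef, pow_add]
  have hlt : (1:ℝ)/3^q < porGamma xb Rh (f k) := by
    have e : Rh/((mb:ℝ)+1) = 2 * (1/(4*3^p*((mb:ℝ)+1))) := by
      rw [hRhdef]; field_simp; ring
    have h1 : (1:ℝ)/(4*3^p*((mb:ℝ)+1)) ≤ porGamma xb Rh (f k) := by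
      rw [e] at hγ; linarith
    have h2 : (1:ℝ)/3^q < 1/(4*3^p*((mb:ℝ)+1)) := by
      rw [div_lt_div_iff₀ h3q (by positivity), hqLpow]
      nlinarith
    linarith
  obtain ⟨r, z, hr, hsub⟩ := exists_ball_of_lt_porGamma (by positivity) hlt
  have hzb : ∀ w : ℝ, w ∈ Metric.ball z r → dist w t < 1/3^p := by
    intro w hw
    have h1 : dist w xb < Rh := Metric.mem_ball.1 (hsub hw).1
    have h2 : dist xb t < Rh := by rw [dist_comm]; exact hxbd
    have := dist_triangle w xb t
    have e : (2:ℝ) * Rh = 1/3^p := by rw [hRhdef]; field_simp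
    linarith
  set x' : ℝ := (⌊z * 3^q⌋ : ℤ)/3^q with hx'def
  have hx'grid : x' * 3^q = ((⌊z * 3^q⌋ : ℤ) : ℝ) := by
    rw [hx'def]; field_simp
  have hq0 : (0:ℝ) < 1/3^q := by positivity
  have hx'z : dist x' z < r := by
    have h1 : (⌊z * 3^q⌋ : ℝ) ≤ z * 3^q := Int.floor_le _
    have h2 : z * 3^q < ⌊z * 3^q⌋ + 1 := Int.lt_floor_add_one _
    have hx'le : x' ≤ z := by
      rw [hx'def, div_le_iff₀ h3q]
      linarith
    have hx'gt : z - 1/3^q < x' := by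
      rw [hx'def, lt_div_iff₀ h3q, sub_mul]
      have hcan : 1/(3:ℝ)^q * 3^q = 1 := one_div_mul_cancel (ne_of_gt h3q)
      rw [hcan]
      linarith
    rw [Real.dist_eq, abs_sub_lt_iff]
    have hrq : 1/(3:ℝ)^q < r := hr
    constructor
    · linarith [hrq, hq0, hx'le]
    · linarith [hrq, hx'gt]
  have hx'ballz : x' ∈ Metric.ball z r := by rw [Metric.mem_ball]; exact hx'z
  have hx't : dist x' t < 1/3^p := hzb x' hx'ballz
  have hx'lr : c₀ < x' ∧ x' < c₀ + 2/3^p := by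
    rw [Real.dist_eq, abs_sub_lt_iff, htdef] at hx't
    have e2p : (2:ℝ)/3^p = 1/3^p + 1/3^p := by ring
    constructor
    · linarith [hx't.2]
    · linarith [hx't.1]
  have hx'A : x' ∈ A := hgen x' ⟨⌊z * 3^q⌋, hx'grid⟩ hx'lr.1 hx'lr.2
  have hx'ball : |x' - t₀| < ε := by
    have h := hIball (a := x') ⟨hx'lr.1, by rw [hend]; linarith [hx'lr.2, h2strict]⟩
    rwa [Metric.mem_ball, Real.dist_eq] at h
  have hx'cl : x' ∈ closure (f k) := by
    have h := hclose x' hx'A hx'ball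
    exact closure_mono (fun w hw => by rw [hBdef] at hw; exact hw.1) h
  obtain ⟨b, hbf, hbd⟩ := Metric.mem_closure_iff.1 hx'cl (r - dist x' z) (by linarith [hx'z])
  have hbz : b ∈ Metric.ball z r := by
    rw [Metric.mem_ball]
    have htri := dist_triangle b x' z
    rw [dist_comm b x'] at htri
    linarith [hbd]
  exact (hsub hbz).2 hbf

lemma hgap_Ispec : ∀ L : ℕ, ∃ p : ℕ, L ≤ p ∧ ∀ m ∈ Ispec, p ≤ m → p + L ≤ m := by
  intro L
  refine ⟨L^2 + L, by nlinarith, ?_⟩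
  rintro m ⟨i, hi1, hi2, hi3⟩ hpm
  rcases le_or_gt i L with h | h
  · exfalso
    have h1 : i^2 + i ≤ L^2 + L := by nlinarith
    linarith
  · have h2 : (L+1)^2 ≤ i^2 := Nat.pow_le_pow_left h 2
    have h3 : (L+1)^2 = L^2 + 2*L + 1 := by ring
    linarith

lemma hgap_IspecC : ∀ L : ℕ, ∃ p : ℕ, L ≤ p ∧ ∀ m ∈ Ispecᶜ, p ≤ m → p + L ≤ m := by
  intro L
  set i : ℕ := max L 1 with hidef
  have hi1 : 1 ≤ i := le_max_right _ _
  have hiL : L ≤ i := le_max_left _ _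
  refine ⟨i^2, by nlinarith, ?_⟩
  intro m hm hpm
  by_contra hcon
  push_neg at hcon
  apply hm
  exact ⟨i, hi1, hpm, by nlinarith⟩

lemma cand_le_prod {x y R r : ℝ} {M : Set (ℝ × ℝ)} (hr : 0 < r) (z : ℝ × ℝ)
    (h : Metric.ball z r ⊆ Metric.ball ((x, y) : ℝ × ℝ) R \ M) : r ≤ 2*R := by
  by_contra hc
  push_neg at hc
  have hz : z ∈ Metric.ball ((x, y) : ℝ × ℝ) R := (h (Metric.mem_ball_self hr)).1
  have hzx : |z.1 - x| < R := by
    rw [Metric.mem_ball, Prod.dist_eq] at hz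
    exact lt_of_le_of_lt (le_max_left _ _) hz |>.trans_le (le_refl R) |> fun h' => by
      rw [Real.dist_eq] at h'; exact h'
  have hR0 : 0 < R := lt_of_le_of_lt dist_nonneg (Metric.mem_ball.1 hz)
  set s : ℝ := r/2 + R with hsdef
  have hw : ((z.1 + s, z.2) : ℝ × ℝ) ∈ Metric.ball z r := by
    rw [Metric.mem_ball, Prod.dist_eq]
    simp only [Real.dist_eq]
    have h1 : |z.1 + s - z.1| = s := by
      rw [show z.1 + s - z.1 = s by ring, abs_of_pos (by rw [hsdef]; linarith)]
    have h2 : dist z.2 z.2 = 0 := dist_self _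
    rw [max_lt_iff]
    constructor
    · rw [h1, hsdef]; linarith
    · rw [show z.2 - z.2 = (0:ℝ) by ring, abs_zero]; linarith
  have hw2 := (h hw).1
  rw [Metric.mem_ball, Prod.dist_eq] at hw2
  have h1 : |z.1 + s - x| < R := by
    have := lt_of_le_of_lt (le_max_left _ _) hw2
    rwa [Real.dist_eq] at this
  rw [abs_sub_lt_iff] at h1 hzx
  rw [hsdef] at h1
  linarith [h1.1, hzx.2]

set_option maxHeartbeats 1000000 in
lemma prod_est (K : Set ℕ) {x y R : ℝ} (hx : x ∈ AsetI K) (hy : y ∈ AsetI Kᶜ)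
    (hR0 : 0 < R) (hR1 : R < 1) :
    (1/18 : ℝ) ≤ 2 * porGamma ((x, y) : ℝ × ℝ) R (AsetI K ×ˢ AsetI Kᶜ) / R := by
  classical
  have hxI : x ∈ Set.Icc (0:ℝ) 1 := hx.1
  have hyI : y ∈ Set.Icc (0:ℝ) 1 := hy.1
  have hR6 : 0 < R/6 := by linarith
  have hPex : ∃ n : ℕ, (1/3:ℝ)^n < R/6 := exists_pow_lt_of_lt_one hR6 (by norm_num)
  have hPn0 : (1/3:ℝ)^(Nat.find hPex) < R/6 := Nat.find_spec hPex
  obtain ⟨n', hn'⟩ : ∃ n', Nat.find hPex = n'+1 := by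
    refine ⟨Nat.find hPex - 1, ?_⟩
    rcases Nat.eq_zero_or_pos (Nat.find hPex) with h0 | h0
    · exfalso
      rw [h0, pow_zero] at hPn0
      linarith
    · omega
  have hmin : ¬ ((1/3:ℝ)^(Nat.find hPex - 1) < R/6) :=
    Nat.find_min hPex (by omega)
  push_neg at hmin
  rw [hn'] at hPn0
  have hmin' : R/6 ≤ (1/3:ℝ)^n' := by
    rw [hn'] at hmin
    simpa using hmin
  set δ : ℝ := 1/3^(n'+1) with hδdef
  have hδpos : 0 < δ := by rw [hδdef]; positivity
  have hδR : δ < R/6 := by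
    rw [hδdef, ← one_div_pow]
    exact hPn0
  have hRδ : R ≤ 18*δ := by
    have e : (1/3:ℝ)^(n'+1) = (1/3)^n' * (1/3) := pow_succ _ _
    have e2 : δ = (1/3:ℝ)^(n'+1) := by rw [hδdef, ← one_div_pow]
    linarith
  have h2δ : (2:ℝ)/3^(n'+1) = 2*δ := by rw [hδdef]; ring
  have hbdd : BddAbove {r : ℝ | 0 < r ∧ ∃ z : ℝ × ℝ,
      Metric.ball z r ⊆ Metric.ball ((x, y) : ℝ × ℝ) R \ (AsetI K ×ˢ AsetI Kᶜ)} := by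
    refine ⟨2*R, ?_⟩
    rintro r ⟨hr0, z, hz⟩
    exact cand_le_prod hr0 z hz
  have key : δ/2 ≤ porGamma ((x, y) : ℝ × ℝ) R (AsetI K ×ˢ AsetI Kᶜ) := by
    by_cases hK : (n'+1) ∈ K
    · obtain ⟨i, hi, hu, hv⟩ := exists_hole hxI n'
      set u0 : ℝ := (1+3*(i:ℝ))/3^(n'+1) with hu0def
      set v0 : ℝ := (2+3*(i:ℝ))/3^(n'+1) with hv0def
      have huv : v0 - u0 = δ := by rw [hv0def, hu0def, hδdef]; ring
      apply le_csSup hbdd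
      refine ⟨by linarith, ((u0+v0)/2, y), ?_⟩
      intro w hw
      rw [Metric.mem_ball, Prod.dist_eq, max_lt_iff] at hw
      obtain ⟨hw1, hw2⟩ := hw
      rw [Real.dist_eq, abs_sub_lt_iff] at hw1 hw2
      have hwIoo : w.1 ∈ Set.Ioo u0 v0 := by
        constructor <;> [linarith [hw1.2]; linarith [hw1.1]]
      constructor
      · rw [Metric.mem_ball, Prod.dist_eq, max_lt_iff]
        constructor
        · rw [Real.dist_eq, abs_sub_lt_iff]
          constructor
          · linarith [hwIoo.2, hv]
          · linarith [hwIoo.1, hu]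
        · rw [Real.dist_eq, abs_sub_lt_iff]
          constructor
          · linarith [hw2.1]
          · linarith [hw2.2]
      · intro hwM
        have hw1A : w.1 ∈ AsetI K := (Set.mem_prod.1 hwM).1
        have hwD : w.1 ∈ Dset (n'+1) := hole_subset_Dset hi hwIoo
        exact hw1A.2 (Set.mem_biUnion hK hwD)
    · have hK' : (n'+1) ∈ Kᶜ := hK
      obtain ⟨i, hi, hu, hv⟩ := exists_hole hyI n'
      set u0 : ℝ := (1+3*(i:ℝ))/3^(n'+1) with hu0def
      set v0 : ℝ := (2+3*(i:ℝ))/3^(n'+1) with hv0def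
      have huv : v0 - u0 = δ := by rw [hv0def, hu0def, hδdef]; ring
      apply le_csSup hbdd
      refine ⟨by linarith, (x, (u0+v0)/2), ?_⟩
      intro w hw
      rw [Metric.mem_ball, Prod.dist_eq, max_lt_iff] at hw
      obtain ⟨hw1, hw2⟩ := hw
      rw [Real.dist_eq, abs_sub_lt_iff] at hw1 hw2
      have hwIoo : w.2 ∈ Set.Ioo u0 v0 := by
        constructor <;> [linarith [hw2.2]; linarith [hw2.1]]
      constructor
      · rw [Metric.mem_ball, Prod.dist_eq, max_lt_iff]
        constructor
        · rw [Real.dist_eq, abs_sub_lt_iff]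
          constructor
          · linarith [hw1.1]
          · linarith [hw1.2]
        · rw [Real.dist_eq, abs_sub_lt_iff]
          constructor
          · linarith [hwIoo.2, hv]
          · linarith [hwIoo.1, hu]
      · intro hwM
        have hw2A : w.2 ∈ AsetI Kᶜ := (Set.mem_prod.1 hwM).2
        have hwD : w.2 ∈ Dset (n'+1) := hole_subset_Dset hi hwIoo
        exact hw2A.2 (Set.mem_biUnion hK' hwD)
  rw [le_div_iff₀ hR0]
  linarith

lemma lowerPorous_prod (K : Set ℕ) : LowerPorous (AsetI K ×ˢ AsetI Kᶜ) := by
  rintro ⟨x, y⟩ hxy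
  rw [Set.mem_prod] at hxy
  unfold LowerPorousAt
  rw [Filter.liminf_eq]
  have hmem : (1/18:ℝ) ∈ {a : ℝ | ∀ᶠ R in nhdsWithin (0:ℝ) (Set.Ioi 0),
      a ≤ 2 * porGamma ((x, y) : ℝ × ℝ) R (AsetI K ×ˢ AsetI Kᶜ) / R} := by
    have hIoo : Set.Ioo (0:ℝ) 1 ∈ nhdsWithin (0:ℝ) (Set.Ioi 0) :=
      Ioo_mem_nhdsGT_of_mem ⟨le_refl 0, one_pos⟩
    exact Filter.eventually_of_mem hIoo (fun R hR => prod_est K hxy.1 hxy.2 hR.1 hR.2)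
  have hbdd : BddAbove {a : ℝ | ∀ᶠ R in nhdsWithin (0:ℝ) (Set.Ioi 0),
      a ≤ 2 * porGamma ((x, y) : ℝ × ℝ) R (AsetI K ×ˢ AsetI Kᶜ) / R} := by
    refine ⟨8, ?_⟩
    rintro a ha
    have hub : ∀ᶠ R in nhdsWithin (0:ℝ) (Set.Ioi 0),
        2 * porGamma ((x, y) : ℝ × ℝ) R (AsetI K ×ˢ AsetI Kᶜ) / R ≤ 8 := by
      apply eventually_nhdsWithin_of_forall
      intro R hR
      have hRpos : (0:ℝ) < R := hR
      have hγ : porGamma ((x, y) : ℝ × ℝ) R (AsetI K ×ˢ AsetI Kᶜ) ≤ 2*R := by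
        apply Real.sSup_le
        · rintro r ⟨hr0, z, hz⟩
          exact cand_le_prod hr0 z hz
        · positivity
      have hγ0 : 0 ≤ porGamma ((x, y) : ℝ × ℝ) R (AsetI K ×ˢ AsetI Kᶜ) := by
        apply Real.sSup_nonneg
        rintro r ⟨hr0, -⟩
        exact le_of_lt hr0
      rw [div_le_iff₀ hRpos]
      linarith
    have ha' : ∀ᶠ R in nhdsWithin (0:ℝ) (Set.Ioi 0),
        a ≤ 2 * porGamma ((x, y) : ℝ × ℝ) R (AsetI K ×ˢ AsetI Kᶜ) / R := ha
    obtain ⟨R, h1, h2⟩ := (ha'.and hub).exists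
    linarith
  exact lt_of_lt_of_le (by norm_num) (le_csSup hbdd hmem)

/-- For `I = ⋃_{i≥1} [i², i²+i) ∩ ℕ` and `J = ℕ \ I`, the sets `A_I, A_J` are closed,
neither is σ-lower porous, yet `A_I × A_J` is lower porous in `ℝ²` with the maximum
metric. -/
theorem AsetI_Ispec_counterexample :
    IsClosed (AsetI Ispec) ∧ IsClosed (AsetI Ispecᶜ) ∧
    ¬ SigmaLowerPorous (AsetI Ispec) ∧ ¬ SigmaLowerPorous (AsetI Ispecᶜ) ∧
    LowerPorous (AsetI Ispec ×ˢ AsetI Ispecᶜ) := by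
  exact ⟨isClosed_AsetI _, isClosed_AsetI _, not_sigmaLowerPorous _ hgap_Ispec,
    not_sigmaLowerPorous _ hgap_IspecC, lowerPorous_prod Ispec⟩
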